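/- Fix natural numbers N ≥ 1, M, G ≥ 1, a matrix H ∈ ℂ^{(M+1)×N}, a group index g ∈ {1,…,G}, and σ > 0. For precoders f = (f₁,…,f_G) with each fᵢ ∈ ℂ^N and a vector e ∈ ℂ^{M+1}, define the rate R(f, e) = ln( 1 + |eᴴ H f_g|² / ( Σ_{i≠g} |eᴴ H fᵢ|² + σ² ) ). Given a fixed point (fⁿ, eⁿ), set r₋ = Σ_{i≠g} |(eⁿ)ᴴ H fᵢⁿ|² + σ², r = Σ_{i=1}^{G} |(eⁿ)ᴴ H fᵢⁿ|² + σ², t = (eⁿ)ᴴ H f_gⁿ, a = conj(t)/r₋, b = |t|²/(r₋ · r), and const = R(fⁿ, eⁿ) − b·σ² − b·r. Then for all precoders f and all vectors e ∈ ℂ^{M+1}: R(f, e) ≥ const + 2·Re( a · eᴴ H f_g ) − b · Σ_{i=1}^{G} |eᴴ H fᵢ|². -/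

import Mathlib

open Matrix

lemma core_ineq (s S rm r U T P : ℝ) (hs : 0 < s) (hS : 0 < S) (hrm : 0 < rm) (hr : 0 < r)
    (hSsU : S = s + U) (hrT : r = rm + T)
    (hq : 0 ≤ r ^ 2 * U - 2 * r * S * P + S ^ 2 * T) :
    Real.log (S / s) ≥ Real.log (r / rm) - (T / (rm * r)) * r + 2 * (P / rm)
      - (T / (rm * r)) * S := by
  have h1 : Real.log ((s * r) / (S * rm)) ≤ (s * r) / (S * rm) - 1 :=
    Real.log_le_sub_one_of_pos (by positivity)
  have h2 : Real.log ((s * r) / (S * rm)) = Real.log (r / rm) - Real.log (S / s) := by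
    rw [Real.log_div (by positivity) (by positivity),
        Real.log_div (by positivity) (by positivity),
        Real.log_div (by positivity) (by positivity),
        Real.log_mul (by positivity) (by positivity),
        Real.log_mul (by positivity) (by positivity)]
    ring
  have hsv : s = S - U := by linarith
  have hTv : T = r - rm := by linarith
  have hkey : 1 - (s * r) / (S * rm)
      - (- (T / (rm * r)) * r + 2 * (P / rm) - (T / (rm * r)) * S)
      = (r ^ 2 * U - 2 * r * S * P + S ^ 2 * T) / (rm * r * S) := by
    rw [hsv, hTv]
    field_simp
    ring
  have hkey2 : 0 ≤ (r ^ 2 * U - 2 * r * S * P + S ^ 2 * T) / (rm * r * S) :=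
    div_nonneg hq (by positivity)
  linarith

set_option maxHeartbeats 1000000 in
theorem stmt2 (N M G : ℕ) (hN : 1 ≤ N) (hG : 1 ≤ G)
    (H : Matrix (Fin (M + 1)) (Fin N) ℂ) (g : Fin G) (σ : ℝ) (hσ : 0 < σ)
    (R : (Fin G → Fin N → ℂ) → (Fin (M + 1) → ℂ) → ℝ)
    (hR : ∀ f e, R f e =
      Real.log (1 + ‖star e ⬝ᵥ H.mulVec (f g)‖ ^ 2 /
        ((∑ i ∈ Finset.univ.erase g, ‖star e ⬝ᵥ H.mulVec (f i)‖ ^ 2) + σ ^ 2)))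
    (fn : Fin G → Fin N → ℂ) (en : Fin (M + 1) → ℂ)
    (rm r : ℝ) (t a : ℂ) (b C : ℝ)
    (hrm : rm = (∑ i ∈ Finset.univ.erase g,
        ‖star en ⬝ᵥ H.mulVec (fn i)‖ ^ 2) + σ ^ 2)
    (hr : r = (∑ i, ‖star en ⬝ᵥ H.mulVec (fn i)‖ ^ 2) + σ ^ 2)
    (ht : t = star en ⬝ᵥ H.mulVec (fn g))
    (ha : a = starRingEnd ℂ t / (rm : ℂ))
    (hb : b = ‖t‖ ^ 2 / (rm * r))
    (hC : C = R fn en - b * σ ^ 2 - b * r) :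
    ∀ (f : Fin G → Fin N → ℂ) (e : Fin (M + 1) → ℂ),
      R f e ≥ C + 2 * (a * (star e ⬝ᵥ H.mulVec (f g))).re
        - b * ∑ i, ‖star e ⬝ᵥ H.mulVec (f i)‖ ^ 2 := by
  intro f e
  have hσ2 : (0:ℝ) < σ ^ 2 := pow_pos hσ 2
  set u : ℂ := star e ⬝ᵥ H.mulVec (f g) with hu
  set E : ℝ := ∑ i ∈ Finset.univ.erase g, ‖star e ⬝ᵥ H.mulVec (f i)‖ ^ 2 with hE
  set U : ℝ := ‖u‖ ^ 2 with hUdef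
  set T : ℝ := ‖t‖ ^ 2 with hTdef
  set P : ℝ := ((starRingEnd ℂ t) * u).re with hPdef
  have hEnn : 0 ≤ E := Finset.sum_nonneg fun i _ => pow_nonneg (norm_nonneg _) 2
  have hUnn : (0:ℝ) ≤ U := pow_nonneg (norm_nonneg _) 2
  have hsum : (∑ i, ‖star e ⬝ᵥ H.mulVec (f i)‖ ^ 2) = E + U := by
    rw [← Finset.sum_erase_add _ _ (Finset.mem_univ g)]
  -- positivity facts
  have hs : (0:ℝ) < E + σ ^ 2 := by linarith
  have hS : (0:ℝ) < E + σ ^ 2 + U := by linarith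
  have hrm0 : (0:ℝ) < rm := by
    rw [hrm]
    have : 0 ≤ ∑ i ∈ Finset.univ.erase g, ‖star en ⬝ᵥ H.mulVec (fn i)‖ ^ 2 :=
      Finset.sum_nonneg fun i _ => pow_nonneg (norm_nonneg _) 2
    linarith
  have hrsplit : r = rm + T := by
    rw [hr, hrm, ← Finset.sum_erase_add _ _ (Finset.mem_univ g), hTdef, ht]
    ring
  have hTnn : (0:ℝ) ≤ T := pow_nonneg (norm_nonneg _) 2
  have hr0 : (0:ℝ) < r := by rw [hrsplit]; linarith
  -- rewrite R f e and R fn en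
  have hRfe : R f e = Real.log ((E + σ ^ 2 + U) / (E + σ ^ 2)) := by
    rw [hR f e, ← hu, ← hE, ← hUdef,
      show (1 : ℝ) + U / (E + σ ^ 2) = (E + σ ^ 2 + U) / (E + σ ^ 2) by
        field_simp]
  have hRfn : R fn en = Real.log (r / rm) := by
    rw [hR fn en, ← ht, ← hTdef, ← hrm,
      show (1 : ℝ) + T / rm = (rm + T) / rm by field_simp, ← hrsplit]
  -- (a * u).re = P / rm
  have hau : (a * u).re = P / rm := by
    rw [ha, div_mul_eq_mul_div, Complex.div_ofReal_re]
  -- component forms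
  have hU' : U = u.re ^ 2 + u.im ^ 2 := by
    rw [hUdef, Complex.sq_norm, Complex.normSq_apply]; ring
  have hT' : T = t.re ^ 2 + t.im ^ 2 := by
    rw [hTdef, Complex.sq_norm, Complex.normSq_apply]; ring
  have hP' : P = t.re * u.re + t.im * u.im := by
    rw [hPdef, Complex.mul_re, Complex.conj_re, Complex.conj_im]
    ring
  -- completed square
  have hexp : r ^ 2 * U - 2 * r * (E + σ ^ 2 + U) * P + (E + σ ^ 2 + U) ^ 2 * T
      = (r * u.re - (E + σ ^ 2 + U) * t.re) ^ 2
        + (r * u.im - (E + σ ^ 2 + U) * t.im) ^ 2 := by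
    rw [hU', hT', hP']
    ring
  have hq : 0 ≤ r ^ 2 * U - 2 * r * (E + σ ^ 2 + U) * P + (E + σ ^ 2 + U) ^ 2 * T := by
    rw [hexp]
    positivity
  have hcore := core_ineq (E + σ ^ 2) (E + σ ^ 2 + U) rm r U T P hs hS hrm0 hr0
    (by ring) hrsplit hq
  rw [hRfe, hsum, hC, hRfn, hb, hau]
  have hbexp : T / (rm * r) * σ ^ 2 + T / (rm * r) * (E + U)
      = T / (rm * r) * (E + σ ^ 2 + U) := by ring
  linarith [hcore, hbexp]
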